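/- For a 2×n array A with pairwise distinct entries, define the DAG D^k_A with root node the interval [1,n]; a node [a,b] is a leaf if 2(b−a+1) ≤ k; otherwise, letting a' and b' be the leftmost and rightmost columns among the positions of the k largest values in A[1,2][a..b], the node has left child [a, b'−1] when a < b' and right child [a'+1, b] when a' < b. Then any two distinct nodes p, q of D^k_A have different Top-k answer sets: the set of positions of the k largest values of A restricted to the columns of p differs from that for q. -/

import Mathlib

/-- `InRange a b p` : `p` is a position of a 2-row array lying in columns `a..b`. -/
def InRange (a b : ℕ) (p : ℕ × ℕ) : Prop :=
  (p.1 = 1 ∨ p.1 = 2) ∧ a ≤ p.2 ∧ p.2 ≤ b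

/-- The set of positions of the `min(k, 2(b-a+1))` largest values of `A` restricted to
columns `a..b`: those positions in range dominated by fewer than `k` in-range values. -/
def TopkSet (A : ℕ → ℕ → ℝ) (k a b : ℕ) : Set (ℕ × ℕ) :=
  {p | InRange a b p ∧ {q | InRange a b q ∧ A p.1 p.2 < A q.1 q.2}.ncard < k}

/-- The leftmost column among the answers of the Top-k query on columns `a..b`. -/
noncomputable def leftCol (A : ℕ → ℕ → ℝ) (k a b : ℕ) : ℕ :=
  sInf {c | ∃ r, (r, c) ∈ TopkSet A k a b}

/-- The rightmost column among the answers of the Top-k query on columns `a..b`. -/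
noncomputable def rightCol (A : ℕ → ℕ → ℝ) (k a b : ℕ) : ℕ :=
  sSup {c | ∃ r, (r, c) ∈ TopkSet A k a b}

/-- `IsChild A k q p` : `q` is a non-leaf node (interval) and `p` is its left or right
child in the DAG `D^k_A`. -/
def IsChild (A : ℕ → ℕ → ℝ) (k : ℕ) (q p : ℕ × ℕ) : Prop :=
  k < 2 * (q.2 - q.1 + 1) ∧
    ((p = (q.1, rightCol A k q.1 q.2 - 1) ∧ q.1 < rightCol A k q.1 q.2) ∨
     (p = (leftCol A k q.1 q.2 + 1, q.2) ∧ leftCol A k q.1 q.2 < q.2))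

/-- The nodes of the DAG `D^k_A` on a `2 × n` array: the root is `[1, n]`, and the
children of a non-leaf node are as prescribed by `IsChild`. -/
inductive IsNode (A : ℕ → ℕ → ℝ) (k n : ℕ) : ℕ × ℕ → Prop
  | root : IsNode A k n (1, n)
  | child {q p : ℕ × ℕ} : IsNode A k n q → IsChild A k q p → IsNode A k n p

/-- `p` is a descendant of `q` in the DAG `D^k_A`. -/
def Descendant (A : ℕ → ℕ → ℝ) (k : ℕ) (p q : ℕ × ℕ) : Prop :=
  Relation.TransGen (fun x y => IsChild A k y x) p q

/-- All entries of the `2 × n` array `A` are pairwise distinct. -/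
def DistinctEntries (A : ℕ → ℕ → ℝ) (n : ℕ) : Prop :=
  Set.InjOn (fun p : ℕ × ℕ => A p.1 p.2) {p | InRange 1 n p}

attribute [local instance] Classical.propDecidable

section Counting
variable {α : Type*}

private lemma rank_lt_of_lt (s : Finset α) (f : α → ℝ) {x y : α}
    (hy : y ∈ s) (hxy : f x < f y) :
    (s.filter (fun w => f y < f w)).card < (s.filter (fun w => f x < f w)).card := by
  apply Finset.card_lt_card
  rw [Finset.ssubset_iff_of_subset]
  · exact ⟨y, Finset.mem_filter.2 ⟨hy, hxy⟩, by simp⟩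
  · intro w hw
    rw [Finset.mem_filter] at hw ⊢
    exact ⟨hw.1, hxy.trans hw.2⟩

private lemma rank_injOn (s : Finset α) (f : α → ℝ) (hf : Set.InjOn f ↑s) :
    Set.InjOn (fun x => (s.filter (fun w => f x < f w)).card) ↑s := by
  intro x hx y hy h
  simp only at h
  by_contra hne
  have hfne : f x ≠ f y := fun h' => hne (hf hx hy h')
  rcases lt_or_gt_of_ne hfne with hlt | hlt
  · have := rank_lt_of_lt s f hy hlt
    omega
  · have := rank_lt_of_lt s f hx hlt
    omega

private lemma rank_image (s : Finset α) (f : α → ℝ) (hf : Set.InjOn f ↑s) :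
    s.image (fun x => (s.filter (fun w => f x < f w)).card) = Finset.range s.card := by
  apply Finset.eq_of_subset_of_card_le
  · intro m hm
    simp only [Finset.mem_image] at hm
    obtain ⟨x, hx, rfl⟩ := hm
    rw [Finset.mem_range]
    calc (s.filter (fun w => f x < f w)).card
        ≤ (s.erase x).card := Finset.card_le_card (by
          intro w hw
          rw [Finset.mem_filter] at hw
          rw [Finset.mem_erase]
          exact ⟨fun h => by rw [h] at hw; exact lt_irrefl _ hw.2, hw.1⟩)
      _ < s.card := Finset.card_erase_lt_of_mem hx
  · rw [Finset.card_range, Finset.card_image_of_injOn (rank_injOn s f hf)]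

private lemma count_ge (s : Finset α) (f : α → ℝ) (hf : Set.InjOn f ↑s) (k : ℕ)
    (hk : k ≤ s.card) :
    k ≤ (s.filter (fun x => (s.filter (fun w => f x < f w)).card < k)).card := by
  have h1 : Finset.filter (fun m => m < k)
      (s.image (fun x => (s.filter (fun w => f x < f w)).card))
      = (s.filter (fun x => (s.filter (fun w => f x < f w)).card < k)).image
        (fun x => (s.filter (fun w => f x < f w)).card) := Finset.filter_image
  have h2 : Finset.filter (fun m => m < k) (Finset.range s.card) = Finset.range k := by
    ext m
    simp only [Finset.mem_filter, Finset.mem_range]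
    omega
  calc k = (Finset.range k).card := (Finset.card_range k).symm
    _ = ((s.filter (fun x => (s.filter (fun w => f x < f w)).card < k)).image
        (fun x => (s.filter (fun w => f x < f w)).card)).card := by
        rw [← h1, rank_image s f hf, h2]
    _ ≤ _ := Finset.card_image_le

private lemma topk_card_ge {S : Set α} (hS : S.Finite) (f : α → ℝ) (hf : Set.InjOn f S)
    (k : ℕ) (hk : k ≤ S.ncard) :
    k ≤ {x | x ∈ S ∧ {y | y ∈ S ∧ f x < f y}.ncard < k}.ncard := by
  set s := hS.toFinset with hs
  have hcoe : (↑s : Set α) = S := hS.coe_toFinset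
  have hdom : ∀ x, {y | y ∈ S ∧ f x < f y} = ↑(s.filter (fun w => f x < f w)) := by
    intro x
    ext y
    simp [hs, hS.mem_toFinset, And.comm]
  have hmain : {x | x ∈ S ∧ {y | y ∈ S ∧ f x < f y}.ncard < k}
      = ↑(s.filter (fun x => (s.filter (fun w => f x < f w)).card < k)) := by
    ext x
    rw [Finset.coe_filter]
    simp only [Set.mem_setOf_eq, hS.mem_toFinset]
    constructor
    · rintro ⟨h1, h2⟩
      rw [hdom x, Set.ncard_coe_finset] at h2
      exact ⟨hS.mem_toFinset.2 h1, h2⟩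
    · rintro ⟨h1, h2⟩
      rw [hdom x, Set.ncard_coe_finset]
      exact ⟨hS.mem_toFinset.1 h1, h2⟩
  rw [hmain, Set.ncard_coe_finset]
  refine count_ge s f (by rw [hcoe]; exact hf) k ?_
  rw [← hcoe, Set.ncard_coe_finset] at hk
  exact hk

private lemma topk_all {S : Set α} (hS : S.Finite) (f : α → ℝ) (k : ℕ) (hcard : S.ncard ≤ k)
    {x : α} (hx : x ∈ S) : {y | y ∈ S ∧ f x < f y}.ncard < k := by
  calc {y | y ∈ S ∧ f x < f y}.ncard ≤ (S \ {x}).ncard := by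
        apply Set.ncard_le_ncard _ hS.diff
        intro y hy
        exact ⟨hy.1, fun h => by simp only [Set.mem_singleton_iff] at h
                                 rw [h] at hy; exact lt_irrefl _ hy.2⟩
    _ < S.ncard := Set.ncard_diff_singleton_lt_of_mem hx hS
    _ ≤ k := hcard

end Counting

section RangeFacts

private lemma inRange_finite (a b : ℕ) : {p : ℕ × ℕ | InRange a b p}.Finite := by
  have : {p : ℕ × ℕ | InRange a b p} = ↑(({1, 2} : Finset ℕ) ×ˢ Finset.Icc a b) := by
    ext ⟨r, c⟩
    simp [InRange, Finset.mem_product]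
  rw [this]
  exact (({1, 2} : Finset ℕ) ×ˢ Finset.Icc a b).finite_toSet

private lemma inRange_ncard {a b : ℕ} (hab : a ≤ b) :
    {p : ℕ × ℕ | InRange a b p}.ncard = 2 * (b - a + 1) := by
  have : {p : ℕ × ℕ | InRange a b p} = ↑(({1, 2} : Finset ℕ) ×ˢ Finset.Icc a b) := by
    ext ⟨r, c⟩
    simp [InRange, Finset.mem_product]
  rw [this, Set.ncard_coe_finset, Finset.card_product, Nat.card_Icc]
  have : ({1, 2} : Finset ℕ).card = 2 := rfl
  rw [this]
  omega

private lemma sub_finite (a b : ℕ) {P : ℕ × ℕ → Prop} :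
    {y : ℕ × ℕ | InRange a b y ∧ P y}.Finite :=
  (inRange_finite a b).subset (fun _ hy => hy.1)

private lemma topk_subset (A : ℕ → ℕ → ℝ) (k a b : ℕ) :
    TopkSet A k a b ⊆ {p : ℕ × ℕ | InRange a b p} := fun _ hx => hx.1

private lemma topk_finite (A : ℕ → ℕ → ℝ) (k a b : ℕ) : (TopkSet A k a b).Finite :=
  (inRange_finite a b).subset (topk_subset A k a b)

private lemma topk_nonempty (A : ℕ → ℕ → ℝ) {k a b : ℕ} (hk : 1 ≤ k) (hab : a ≤ b) :
    (TopkSet A k a b).Nonempty := by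
  have hfin := inRange_finite a b
  have hne : {p : ℕ × ℕ | InRange a b p}.Nonempty :=
    ⟨(1, a), Or.inl rfl, le_refl a, hab⟩
  obtain ⟨x, hx, hmax⟩ :=
    Set.exists_max_image {p : ℕ × ℕ | InRange a b p} (fun p => A p.1 p.2) hfin hne
  refine ⟨x, hx, ?_⟩
  have hempty : {q | InRange a b q ∧ A x.1 x.2 < A q.1 q.2} = ∅ := by
    ext y
    simp only [Set.mem_setOf_eq, Set.mem_empty_iff_false, iff_false, not_and, not_lt]
    intro hy
    exact hmax y hy
  rw [hempty]
  simp only [Set.ncard_empty]; omega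

/-- A non-leaf interval has a full top-k set of size at least `k`. -/
private lemma topk_card_ge_k {A : ℕ → ℕ → ℝ} {n k a b : ℕ}
    (hA : DistinctEntries A n) (ha : 1 ≤ a) (hab : a ≤ b) (hb : b ≤ n)
    (hk2 : k ≤ 2 * (b - a + 1)) : k ≤ (TopkSet A k a b).ncard := by
  have hsub : {p : ℕ × ℕ | InRange a b p} ⊆ {p : ℕ × ℕ | InRange 1 n p} := by
    rintro ⟨r, c⟩ ⟨h1, h2, h3⟩
    exact ⟨h1, by omega, by omega⟩
  have hinj : Set.InjOn (fun p : ℕ × ℕ => A p.1 p.2) {p : ℕ × ℕ | InRange a b p} :=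
    hA.mono hsub
  have := topk_card_ge (inRange_finite a b) (fun p : ℕ × ℕ => A p.1 p.2) hinj k
    (by rw [inRange_ncard hab]; exact hk2)
  exact this

/-- Every in-range position belongs to the top-k set of a leaf interval. -/
private lemma leaf_mem {A : ℕ → ℕ → ℝ} {k a b : ℕ} (hab : a ≤ b)
    (hleaf : 2 * (b - a + 1) ≤ k) {x : ℕ × ℕ} (hx : InRange a b x) :
    x ∈ TopkSet A k a b := by
  refine ⟨hx, ?_⟩
  exact topk_all (inRange_finite a b) (fun p : ℕ × ℕ => A p.1 p.2) k
    (by rw [inRange_ncard hab]; exact hleaf) hx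

private lemma rightCol_spec (A : ℕ → ℕ → ℝ) {k a b : ℕ} (hk : 1 ≤ k) (hab : a ≤ b) :
    ∃ r, (r, rightCol A k a b) ∈ TopkSet A k a b := by
  have hne : {c | ∃ r, (r, c) ∈ TopkSet A k a b}.Nonempty := by
    obtain ⟨x, hx⟩ := topk_nonempty A hk hab
    exact ⟨x.2, x.1, by simpa using hx⟩
  have hbdd : BddAbove {c | ∃ r, (r, c) ∈ TopkSet A k a b} :=
    ⟨b, fun c ⟨r, hr⟩ => hr.1.2.2⟩
  exact Nat.sSup_mem hne hbdd

private lemma leftCol_spec (A : ℕ → ℕ → ℝ) {k a b : ℕ} (hk : 1 ≤ k) (hab : a ≤ b) :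
    ∃ r, (r, leftCol A k a b) ∈ TopkSet A k a b := by
  have hne : {c | ∃ r, (r, c) ∈ TopkSet A k a b}.Nonempty := by
    obtain ⟨x, hx⟩ := topk_nonempty A hk hab
    exact ⟨x.2, x.1, by simpa using hx⟩
  exact Nat.sInf_mem hne

end RangeFacts

/-- The key invariant maintained by all nodes of the DAG: the interval is within
bounds, and just outside each non-extreme boundary there is an entry with few
dominators inside the slightly extended interval. -/
def NodeInv (A : ℕ → ℕ → ℝ) (n k : ℕ) (v : ℕ × ℕ) : Prop :=
  1 ≤ v.1 ∧ v.1 ≤ v.2 ∧ v.2 ≤ n ∧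
  (v.1 = 1 ∨ ∃ z : ℕ × ℕ, (z.1 = 1 ∨ z.1 = 2) ∧ z.2 = v.1 - 1 ∧
      {y | InRange (v.1 - 1) v.2 y ∧ A z.1 z.2 < A y.1 y.2}.ncard < k) ∧
  (v.2 = n ∨ ∃ z : ℕ × ℕ, (z.1 = 1 ∨ z.1 = 2) ∧ z.2 = v.2 + 1 ∧
      {y | InRange v.1 (v.2 + 1) y ∧ A z.1 z.2 < A y.1 y.2}.ncard < k)

private lemma node_inv {A : ℕ → ℕ → ℝ} {n k : ℕ} (hn : 1 ≤ n) (hk : 1 ≤ k)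
    {v : ℕ × ℕ} (hv : IsNode A k n v) : NodeInv A n k v := by
  induction hv with
  | root => exact ⟨le_refl 1, hn, le_refl n, Or.inl rfl, Or.inl rfl⟩
  | @child v p _ hch ih =>
    obtain ⟨h1, h2, h3, hL, hR⟩ := ih
    rcases hch.2 with ⟨hpeq, hlt⟩ | ⟨hpeq, hlt⟩
    · -- left child : p = (v.1, rightCol - 1)
      set b' := rightCol A k v.1 v.2 with hb'
      obtain ⟨r, hr⟩ := rightCol_spec A hk h2
      have hb'le : b' ≤ v.2 := hr.1.2.2
      have hb'ge : 1 ≤ b' := by omega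
      subst hpeq
      refine ⟨h1, by simp; omega, by simp; omega, ?_, ?_⟩
      · -- left condition, carried over
        rcases hL with h | ⟨z, hz1, hz2, hz3⟩
        · exact Or.inl h
        · refine Or.inr ⟨z, hz1, hz2, ?_⟩
          refine lt_of_le_of_lt (Set.ncard_le_ncard ?_ (sub_finite _ _)) hz3
          rintro y ⟨⟨hy1, hy2, hy3⟩, hy4⟩
          exact ⟨⟨hy1, hy2, by simp at hy3 ⊢; omega⟩, hy4⟩
      · -- right condition : witness (r, b')
        refine Or.inr ⟨(r, b'), hr.1.1, by simp; omega, ?_⟩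
        have he : (v.1, b' - 1).2 + 1 = b' := by simp; omega
        rw [he]
        refine lt_of_le_of_lt (Set.ncard_le_ncard ?_ (sub_finite _ _)) hr.2
        rintro y ⟨⟨hy1, hy2, hy3⟩, hy4⟩
        exact ⟨⟨hy1, by simpa using hy2, by omega⟩, hy4⟩
    · -- right child : p = (leftCol + 1, v.2)
      set a' := leftCol A k v.1 v.2 with ha'
      obtain ⟨r, hr⟩ := leftCol_spec A hk h2
      have ha'ge : v.1 ≤ a' := hr.1.2.1
      subst hpeq
      refine ⟨Nat.le_add_left 1 a', by simp; omega, h3, ?_, ?_⟩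
      · -- left condition : witness (r, a')
        refine Or.inr ⟨(r, a'), hr.1.1, by simp, ?_⟩
        have he : (a' + 1, v.2).1 - 1 = a' := by simp
        rw [he]
        refine lt_of_le_of_lt (Set.ncard_le_ncard ?_ (sub_finite _ _)) hr.2
        rintro y ⟨⟨hy1, hy2, hy3⟩, hy4⟩
        exact ⟨⟨hy1, by omega, by simpa using hy3⟩, hy4⟩
      · -- right condition, carried over
        rcases hR with h | ⟨z, hz1, hz2, hz3⟩
        · exact Or.inl h
        · refine Or.inr ⟨z, hz1, hz2, ?_⟩
          refine lt_of_le_of_lt (Set.ncard_le_ncard ?_ (sub_finite _ _)) hz3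
          rintro y ⟨⟨hy1, hy2, hy3⟩, hy4⟩
          exact ⟨⟨hy1, by simp at hy2 ⊢; omega, by simpa using hy3⟩, hy4⟩

private lemma inRange_one_n {A : ℕ → ℕ → ℝ} {n k a b : ℕ} (ha : 1 ≤ a) (hb : b ≤ n)
    {t : ℕ × ℕ} (ht : t ∈ TopkSet A k a b) : InRange 1 n t := by
  obtain ⟨⟨h1, h2, h3⟩, _⟩ := ht
  exact ⟨h1, by omega, by omega⟩

/-- Key lemma : two intervals satisfying the invariant with equal top-k sets
cannot have different right endpoints. -/
private lemma key {A : ℕ → ℕ → ℝ} {n k : ℕ} (hk : 1 ≤ k) (hA : DistinctEntries A n)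
    {p q : ℕ × ℕ} (hp : NodeInv A n k p) (hq : NodeInv A n k q)
    (hT : TopkSet A k p.1 p.2 = TopkSet A k q.1 q.2) (hlt : p.2 < q.2) : False := by
  obtain ⟨hp1, hp2, hp3, hpL, hpR⟩ := hp
  obtain ⟨hq1, hq2, hq3, hqL, hqR⟩ := hq
  -- the top-k set is nonempty
  obtain ⟨t₀, ht₀⟩ := topk_nonempty A hk hp2 (a := p.1) (b := p.2)
  have ht₀q : t₀ ∈ TopkSet A k q.1 q.2 := hT ▸ ht₀
  have hq1p2 : q.1 ≤ p.2 := le_trans ht₀q.1.2.1 ht₀.1.2.2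
  -- the boundary witness from the invariant of p
  have hpn : p.2 ≠ n := by omega
  rcases hpR with h | ⟨z, hz1, hz2, hz3⟩
  · exact hpn h
  have hzq : InRange q.1 q.2 z := ⟨hz1, by omega, by omega⟩
  by_cases hex : ∃ t ∈ TopkSet A k p.1 p.2, A t.1 t.2 < A z.1 z.2
  · -- some top element is smaller than z : then z itself is a top element of q
    obtain ⟨t, ht, htz⟩ := hex
    have htq : t ∈ TopkSet A k q.1 q.2 := hT ▸ ht
    have hzmem : z ∈ TopkSet A k q.1 q.2 := by
      refine ⟨hzq, ?_⟩
      have hss : {y | InRange q.1 q.2 y ∧ A z.1 z.2 < A y.1 y.2}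
          ⊂ {y | InRange q.1 q.2 y ∧ A t.1 t.2 < A y.1 y.2} := by
        constructor
        · rintro y ⟨hy1, hy2⟩
          exact ⟨hy1, htz.trans hy2⟩
        · intro hcon
          have := hcon ⟨hzq, htz⟩
          exact lt_irrefl _ this.2
      exact lt_trans (Set.ncard_lt_ncard hss (sub_finite _ _)) htq.2
    have : z ∈ TopkSet A k p.1 p.2 := hT ▸ hzmem
    have := this.1.2.2
    omega
  · -- z is bigger than every top element : both intervals are leaves
    push_neg at hex
    have hzn : InRange 1 n z := ⟨hz1, by omega, by omega⟩
    have hall : ∀ t ∈ TopkSet A k p.1 p.2, A z.1 z.2 < A t.1 t.2 := by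
      intro t ht
      have h1 := hex t ht
      rcases lt_trichotomy (A z.1 z.2) (A t.1 t.2) with h | h | h
      · exact h
      · exfalso
        have heq := hA hzn (inRange_one_n hp1 hp3 ht) h
        have h22 : z.2 = t.2 := by rw [heq]
        have := ht.1.2.2
        omega
      · exact absurd h (not_lt.2 h1)
    have hsub : TopkSet A k p.1 p.2
        ⊆ {y | InRange p.1 (p.2 + 1) y ∧ A z.1 z.2 < A y.1 y.2} := by
      intro t ht
      exact ⟨⟨ht.1.1, ht.1.2.1, by have := ht.1.2.2; omega⟩, hall t ht⟩
    have hTsmall : (TopkSet A k p.1 p.2).ncard < k :=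
      lt_of_le_of_lt (Set.ncard_le_ncard hsub (sub_finite _ _)) hz3
    have hpleaf : 2 * (p.2 - p.1 + 1) ≤ k := by
      by_contra hcon
      push_neg at hcon
      have := topk_card_ge_k hA hp1 hp2 hp3 (le_of_lt hcon)
      omega
    have hqleaf : 2 * (q.2 - q.1 + 1) ≤ k := by
      by_contra hcon
      push_neg at hcon
      have := topk_card_ge_k hA hq1 hq2 hq3 (le_of_lt hcon)
      rw [← hT] at this
      omega
    -- q is a leaf, so (1, q.2) is a top element of q, hence of p : contradiction
    have : (1, q.2) ∈ TopkSet A k q.1 q.2 :=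
      leaf_mem hq2 hqleaf ⟨Or.inl rfl, hq2, le_refl _⟩
    have h22 : (1, q.2) ∈ TopkSet A k p.1 p.2 := hT ▸ this
    have : q.2 ≤ p.2 := h22.1.2.2
    omega

/-- Mirror of `key` for left endpoints. -/
private lemma key1 {A : ℕ → ℕ → ℝ} {n k : ℕ} (hk : 1 ≤ k) (hA : DistinctEntries A n)
    {p q : ℕ × ℕ} (hp : NodeInv A n k p) (hq : NodeInv A n k q)
    (hT : TopkSet A k p.1 p.2 = TopkSet A k q.1 q.2) (hlt : q.1 < p.1) : False := by
  obtain ⟨hp1, hp2, hp3, hpL, hpR⟩ := hp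
  obtain ⟨hq1, hq2, hq3, hqL, hqR⟩ := hq
  obtain ⟨t₀, ht₀⟩ := topk_nonempty A hk hp2 (a := p.1) (b := p.2)
  have ht₀q : t₀ ∈ TopkSet A k q.1 q.2 := hT ▸ ht₀
  have hp1q2 : p.1 ≤ q.2 := le_trans ht₀.1.2.1 ht₀q.1.2.2
  have hpn : p.1 ≠ 1 := by omega
  rcases hpL with h | ⟨z, hz1, hz2, hz3⟩
  · exact hpn h
  have hzq : InRange q.1 q.2 z := ⟨hz1, by omega, by omega⟩
  by_cases hex : ∃ t ∈ TopkSet A k p.1 p.2, A t.1 t.2 < A z.1 z.2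
  · obtain ⟨t, ht, htz⟩ := hex
    have htq : t ∈ TopkSet A k q.1 q.2 := hT ▸ ht
    have hzmem : z ∈ TopkSet A k q.1 q.2 := by
      refine ⟨hzq, ?_⟩
      have hss : {y | InRange q.1 q.2 y ∧ A z.1 z.2 < A y.1 y.2}
          ⊂ {y | InRange q.1 q.2 y ∧ A t.1 t.2 < A y.1 y.2} := by
        constructor
        · rintro y ⟨hy1, hy2⟩
          exact ⟨hy1, htz.trans hy2⟩
        · intro hcon
          have := hcon ⟨hzq, htz⟩
          exact lt_irrefl _ this.2
      exact lt_trans (Set.ncard_lt_ncard hss (sub_finite _ _)) htq.2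
    have : z ∈ TopkSet A k p.1 p.2 := hT ▸ hzmem
    have := this.1.2.1
    omega
  · push_neg at hex
    have hzn : InRange 1 n z := ⟨hz1, by omega, by omega⟩
    have hall : ∀ t ∈ TopkSet A k p.1 p.2, A z.1 z.2 < A t.1 t.2 := by
      intro t ht
      have h1 := hex t ht
      rcases lt_trichotomy (A z.1 z.2) (A t.1 t.2) with h | h | h
      · exact h
      · exfalso
        have heq := hA hzn (inRange_one_n hp1 hp3 ht) h
        have h22 : z.2 = t.2 := by rw [heq]
        have := ht.1.2.1
        omega
      · exact absurd h (not_lt.2 h1)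
    have hsub : TopkSet A k p.1 p.2
        ⊆ {y | InRange (p.1 - 1) p.2 y ∧ A z.1 z.2 < A y.1 y.2} := by
      intro t ht
      exact ⟨⟨ht.1.1, by have := ht.1.2.1; omega, ht.1.2.2⟩, hall t ht⟩
    have hTsmall : (TopkSet A k p.1 p.2).ncard < k :=
      lt_of_le_of_lt (Set.ncard_le_ncard hsub (sub_finite _ _)) hz3
    have hqleaf : 2 * (q.2 - q.1 + 1) ≤ k := by
      by_contra hcon
      push_neg at hcon
      have := topk_card_ge_k hA hq1 hq2 hq3 (le_of_lt hcon)
      rw [← hT] at this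
      omega
    have : (1, q.1) ∈ TopkSet A k q.1 q.2 :=
      leaf_mem hq2 hqleaf ⟨Or.inl rfl, le_refl _, hq2⟩
    have h22 : (1, q.1) ∈ TopkSet A k p.1 p.2 := hT ▸ this
    have : p.1 ≤ q.1 := h22.1.2.1
    omega

/-- Any two distinct nodes of `D^k_A` have different Top-k answer sets. -/
theorem dag_distinct_topk (A : ℕ → ℕ → ℝ) (n k : ℕ) (hn : 1 ≤ n) (hk : 1 ≤ k)
    (hA : DistinctEntries A n) (p q : ℕ × ℕ)
    (hp : IsNode A k n p) (hq : IsNode A k n q) (hpq : p ≠ q) :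
    TopkSet A k p.1 p.2 ≠ TopkSet A k q.1 q.2 := by
  intro hT
  have hip := node_inv hn hk hp
  have hiq := node_inv hn hk hq
  rcases lt_trichotomy p.2 q.2 with h | h | h
  · exact key hk hA hip hiq hT h
  · rcases lt_trichotomy p.1 q.1 with h1 | h1 | h1
    · exact key1 hk hA hiq hip hT.symm h1
    · exact hpq (Prod.ext_iff.2 ⟨h1, h⟩)
    · exact key1 hk hA hip hiq hT h1
  · exact key hk hA hiq hip hT.symm h
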